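/- There exists a polynomial q with natural-number coefficients such that for every natural number k ≥ 0 and every finite set L with |L| ≥ 2^k, there exists a bipartite graph (L, R, E) such that: |R| = 2^(k+1); every vertex x ∈ L has degree at most q(⌈log₂ |L|⌉) (the bound does not depend on k); and every subset S ⊆ L with |S| ≥ 2^k has at least 2^k neighbors in R, i.e. |E(S)| ≥ 2^k. -/

import Mathlib

/-- The set of neighbors of a set `S` of left vertices in the bipartite graph
with edge relation `E`. -/
def nbhd {α β : Type*} (E : Set (α × β)) (S : Set α) : Set β :=
  {y | ∃ x ∈ S, (x, y) ∈ E}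

open Finset

/-- Numeric inequality for the union bound. -/
lemma key_ineq (k n d N : ℕ) (hd : d = n + 3) (hNn : N ≤ 2 ^ n) (hKN : 2 ^ k ≤ N) :
    N.choose (2 ^ k) * (2 ^ (k + 1)).choose (2 ^ k - 1) * (2 ^ k - 1) ^ (d * 2 ^ k)
      * (2 ^ (k + 1)) ^ (d * (N - 2 ^ k)) < (2 ^ (k + 1)) ^ (d * N) := by
  have hKpos : 0 < 2 ^ k := Nat.pow_pos (by norm_num)
  have h1 : N.choose (2 ^ k) ≤ 2 ^ (n * 2 ^ k) := by
    calc N.choose (2 ^ k) ≤ N ^ 2 ^ k := Nat.choose_le_pow _ _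
    _ ≤ (2 ^ n) ^ 2 ^ k := Nat.pow_le_pow_left hNn _
    _ = 2 ^ (n * 2 ^ k) := (pow_mul 2 n (2 ^ k)).symm
  have h2 : (2 ^ (k + 1)).choose (2 ^ k - 1) ≤ 2 ^ (2 * 2 ^ k) := by
    have : (2 ^ (k + 1)).choose (2 ^ k - 1) ≤ 2 ^ (2 ^ (k + 1)) := by
      calc (2 ^ (k + 1)).choose (2 ^ k - 1)
          ≤ ∑ m ∈ Finset.range (2 ^ (k + 1) + 1), (2 ^ (k + 1)).choose m := by
            have hmem : 2 ^ k - 1 ∈ Finset.range (2 ^ (k + 1) + 1) := by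
              simp only [Finset.mem_range]
              have : 2 ^ k ≤ 2 ^ (k + 1) := Nat.pow_le_pow_right (by norm_num) (by omega)
              omega
            exact Finset.single_le_sum (f := fun m => (2 ^ (k + 1)).choose m)
              (fun _ _ => Nat.zero_le _) hmem
        _ = 2 ^ (2 ^ (k + 1)) := Nat.sum_range_choose _
    have h21 : (2 : ℕ) ^ (k + 1) = 2 * 2 ^ k := by ring
    rw [← h21]; exact this
  have h3 : (2 ^ k - 1) ^ (d * 2 ^ k) ≤ 2 ^ (k * (d * 2 ^ k)) := by
    calc (2 ^ k - 1) ^ (d * 2 ^ k) ≤ (2 ^ k) ^ (d * 2 ^ k) :=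
          Nat.pow_le_pow_left (by omega) _
    _ = 2 ^ (k * (d * 2 ^ k)) := (pow_mul 2 k _).symm
  have hmain : N.choose (2 ^ k) * (2 ^ (k + 1)).choose (2 ^ k - 1) * (2 ^ k - 1) ^ (d * 2 ^ k)
      < (2 ^ (k + 1)) ^ (d * 2 ^ k) := by
    calc N.choose (2 ^ k) * (2 ^ (k + 1)).choose (2 ^ k - 1) * (2 ^ k - 1) ^ (d * 2 ^ k)
        ≤ 2 ^ (n * 2 ^ k) * 2 ^ (2 * 2 ^ k) * 2 ^ (k * (d * 2 ^ k)) := by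
          exact Nat.mul_le_mul (Nat.mul_le_mul h1 h2) h3
      _ = 2 ^ (n * 2 ^ k + 2 * 2 ^ k + k * (d * 2 ^ k)) := by rw [← pow_add, ← pow_add]
      _ < 2 ^ ((k + 1) * (d * 2 ^ k)) := by
          apply Nat.pow_lt_pow_right (by norm_num)
          subst hd
          have : (k + 1) * ((n + 3) * 2 ^ k) = k * ((n + 3) * 2 ^ k) + (n + 3) * 2 ^ k := by ring
          nlinarith [hKpos]
      _ = (2 ^ (k + 1)) ^ (d * 2 ^ k) := (pow_mul 2 (k + 1) _)
  calc N.choose (2 ^ k) * (2 ^ (k + 1)).choose (2 ^ k - 1) * (2 ^ k - 1) ^ (d * 2 ^ k)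
      * (2 ^ (k + 1)) ^ (d * (N - 2 ^ k))
      < (2 ^ (k + 1)) ^ (d * 2 ^ k) * (2 ^ (k + 1)) ^ (d * (N - 2 ^ k)) := by
        apply Nat.mul_lt_mul_of_lt_of_le hmain le_rfl
        exact Nat.pow_pos (Nat.pow_pos (by norm_num))
    _ = (2 ^ (k + 1)) ^ (d * N) := by
        rw [← pow_add]
        congr 1
        have : d * 2 ^ k + d * (N - 2 ^ k) = d * (2 ^ k + (N - 2 ^ k)) := by ring
        rw [this, Nat.add_sub_cancel' hKN]

/-- Core counting lemma: existence of a disperser on `Fin N`. -/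
lemma core (k N : ℕ) (hKN : 2 ^ k ≤ N) :
    ∃ f : Fin N → Finset (Fin (2 ^ (k + 1))),
      (∀ i, (f i).card ≤ Nat.clog 2 N + 3) ∧
      ∀ S : Finset (Fin N), 2 ^ k ≤ S.card → 2 ^ k ≤ (S.biUnion f).card := by
  classical
  set d := Nat.clog 2 N + 3 with hdd
  set K := 2 ^ k with hK
  set M := 2 ^ (k + 1) with hM
  let Bad : Finset (Fin N × Fin d → Fin M) :=
    ((powersetCard K (univ : Finset (Fin N))) ×ˢ
        (powersetCard (K - 1) (univ : Finset (Fin M)))).biUnion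
      (fun p => Fintype.piFinset (fun q : Fin N × Fin d => if q.1 ∈ p.1 then p.2 else univ))
  have hsingle : ∀ p ∈ (powersetCard K (univ : Finset (Fin N))) ×ˢ
      (powersetCard (K - 1) (univ : Finset (Fin M))),
      (Fintype.piFinset (fun q : Fin N × Fin d => if q.1 ∈ p.1 then p.2 else univ)).card
        = ((K - 1) ^ d) ^ K * (M ^ d) ^ (N - K) := by
    rintro ⟨S, T⟩ hp
    rw [Finset.mem_product, Finset.mem_powersetCard, Finset.mem_powersetCard] at hp
    obtain ⟨⟨-, hScard⟩, -, hTcard⟩ := hp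
    rw [Fintype.card_piFinset]
    calc ∏ q : Fin N × Fin d, (if q.1 ∈ S then T else univ).card
        = ∏ i : Fin N, ∏ _j : Fin d, (if i ∈ S then T.card else M) := by
          rw [Fintype.prod_prod_type]
          congr 1; funext i; congr 1; funext j
          by_cases h : i ∈ S <;> simp [h]
      _ = ∏ i : Fin N, (if i ∈ S then (K - 1) ^ d else M ^ d) := by
          congr 1; funext i
          by_cases h : i ∈ S <;> simp [h, hTcard, Finset.prod_const, Finset.card_univ]
      _ = ((K - 1) ^ d) ^ K * (M ^ d) ^ (N - K) := by
          rw [Finset.prod_ite, Finset.prod_const, Finset.prod_const]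
          have e1 : univ.filter (fun i : Fin N => i ∈ S) = S := by ext i; simp
          have e2 : univ.filter (fun i : Fin N => ¬ i ∈ S) = Sᶜ := by
            ext i; simp [Finset.mem_compl]
          rw [e1, e2, hScard, Finset.card_compl, hScard, Fintype.card_fin]
  have hBadcard : Bad.card < Fintype.card (Fin N × Fin d → Fin M) := by
    have hle : Bad.card ≤
        N.choose K * M.choose (K - 1) * (((K - 1) ^ d) ^ K * (M ^ d) ^ (N - K)) := by
      calc Bad.card ≤ ∑ p ∈ (powersetCard K (univ : Finset (Fin N))) ×ˢ
            (powersetCard (K - 1) (univ : Finset (Fin M))),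
            (Fintype.piFinset (fun q : Fin N × Fin d =>
              if q.1 ∈ p.1 then p.2 else univ)).card := Finset.card_biUnion_le
        _ = ((powersetCard K (univ : Finset (Fin N))) ×ˢ
            (powersetCard (K - 1) (univ : Finset (Fin M)))).card *
            (((K - 1) ^ d) ^ K * (M ^ d) ^ (N - K)) := by
            rw [Finset.sum_congr rfl hsingle, Finset.sum_const, smul_eq_mul]
        _ = N.choose K * M.choose (K - 1) * (((K - 1) ^ d) ^ K * (M ^ d) ^ (N - K)) := by
            rw [Finset.card_product, Finset.card_powersetCard, Finset.card_powersetCard,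
              Finset.card_univ, Finset.card_univ, Fintype.card_fin, Fintype.card_fin]
    have hcardfun : Fintype.card (Fin N × Fin d → Fin M) = M ^ (d * N) := by
      rw [Fintype.card_fun, Fintype.card_prod, Fintype.card_fin, Fintype.card_fin,
        Fintype.card_fin, Nat.mul_comm]
    rw [hcardfun]
    apply lt_of_le_of_lt hle
    have := key_ineq k (Nat.clog 2 N) d N hdd (Nat.le_pow_clog (by norm_num) N) hKN
    calc N.choose K * M.choose (K - 1) * (((K - 1) ^ d) ^ K * (M ^ d) ^ (N - K))
        = N.choose K * M.choose (K - 1) * (K - 1) ^ (d * K) * M ^ (d * (N - K)) := by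
          rw [← pow_mul, ← pow_mul]; ring
      _ < M ^ (d * N) := this
  obtain ⟨g, hg⟩ : ∃ g, g ∉ Bad := by
    by_contra h
    push_neg at h
    have : (univ : Finset (Fin N × Fin d → Fin M)) ⊆ Bad := fun g _ => h g
    have := Finset.card_le_card this
    rw [Finset.card_univ] at this
    omega
  refine ⟨fun i => univ.image (fun j => g (i, j)), ?_, ?_⟩
  · intro i
    calc (univ.image (fun j => g (i, j))).card ≤ (univ : Finset (Fin d)).card :=
          Finset.card_image_le
      _ = d := by rw [Finset.card_univ, Fintype.card_fin]
  · intro S hS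
    by_contra hlt
    push_neg at hlt
    obtain ⟨S', hS'sub, hS'card⟩ := Finset.exists_subset_card_eq hS
    have hsub : S'.biUnion (fun i => univ.image (fun j => g (i, j)))
        ⊆ S.biUnion (fun i => univ.image (fun j => g (i, j))) :=
      Finset.biUnion_subset_biUnion_of_subset_left _ hS'sub
    have hle' : (S'.biUnion (fun i => univ.image (fun j => g (i, j)))).card ≤ K - 1 := by
      have := Finset.card_le_card hsub
      omega
    have hKM : K - 1 ≤ Fintype.card (Fin M) := by
      rw [Fintype.card_fin]
      have : K ≤ M := Nat.pow_le_pow_right (by norm_num) (by omega)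
      omega
    obtain ⟨T, hTsub, hTcard⟩ := Finset.exists_superset_card_eq hle' hKM
    apply hg
    apply Finset.mem_biUnion.2
    refine ⟨(S', T), ?_, ?_⟩
    · rw [Finset.mem_product, Finset.mem_powersetCard, Finset.mem_powersetCard]
      exact ⟨⟨Finset.subset_univ _, hS'card⟩, Finset.subset_univ _, hTcard⟩
    · rw [Fintype.mem_piFinset]
      intro q
      by_cases h : q.1 ∈ S'
      · simp only [h, if_true]
        apply hTsub
        exact Finset.mem_biUnion.2 ⟨q.1, h, Finset.mem_image.2 ⟨q.2, Finset.mem_univ _, rfl⟩⟩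
      · simp [h]



/-- Disperser Lemma: There is a polynomial `q` with natural coefficients
such that for every `k ≥ 0` and finite set `L` with `|L| ≥ 2^k` there is a bipartite
graph `(L, R, E)` with `|R| = 2^(k+1)`, left degrees at most `q(⌈log₂ |L|⌉)`,
such that every `S ⊆ L` with `|S| ≥ 2^k` satisfies `|E(S)| ≥ 2^k`. -/
theorem stmt_1 :
    ∃ q : Polynomial ℕ, ∀ (k : ℕ) (α : Type) (L : Set α), L.Finite → 2 ^ k ≤ L.ncard →
      ∃ (β : Type) (R : Set β) (E : Set (α × β)),
        R.Finite ∧ R.ncard = 2 ^ (k + 1) ∧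
        (∀ p ∈ E, p.1 ∈ L ∧ p.2 ∈ R) ∧
        (∀ x ∈ L, (nbhd E {x}).ncard ≤ q.eval (Nat.clog 2 L.ncard)) ∧
        (∀ S ⊆ L, 2 ^ k ≤ S.ncard → 2 ^ k ≤ (nbhd E S).ncard) := by
  classical
  refine ⟨Polynomial.X + Polynomial.C 3, ?_⟩
  intro k α L hL hcard
  set N := L.ncard with hN
  obtain ⟨f, hdeg, hexp⟩ := core k N hcard
  have hcardL : hL.toFinset.card = N := by
    rw [hN, Set.ncard_eq_toFinset_card L hL]
  let e : hL.toFinset ≃ Fin N := (hL.toFinset.equivFin).trans (finCongr hcardL)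
  let φ : Fin N → α := fun i => ((e.symm i : hL.toFinset) : α)
  have φmem : ∀ i, φ i ∈ L := fun i => hL.mem_toFinset.1 (e.symm i).2
  have φinj : Function.Injective φ := by
    intro i j h
    have := Subtype.ext (p := fun x => x ∈ hL.toFinset) h
    exact e.symm.injective this
  have φsurj : ∀ x ∈ L, ∃ i, φ i = x := by
    intro x hx
    refine ⟨e ⟨x, hL.mem_toFinset.2 hx⟩, ?_⟩
    simp only [φ, Equiv.symm_apply_apply]
  refine ⟨Fin (2 ^ (k + 1)), Set.univ,
    {p | ∃ i, p.1 = φ i ∧ p.2 ∈ f i}, Set.finite_univ, ?_, ?_, ?_, ?_⟩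
  · simp [Set.ncard_univ]
  · rintro ⟨x, y⟩ ⟨i, rfl, hy⟩
    exact ⟨φmem i, Set.mem_univ _⟩
  · intro x hx
    obtain ⟨i₀, rfl⟩ := φsurj x hx
    have hnb : nbhd {p : α × Fin (2 ^ (k + 1)) | ∃ i, p.1 = φ i ∧ p.2 ∈ f i} {φ i₀}
        = ↑(f i₀) := by
      ext y
      constructor
      · rintro ⟨x', hx', i, hxi, hy⟩
        rw [Set.mem_singleton_iff] at hx'
        subst hx'
        have hii : i₀ = i := φinj hxi
        subst hii
        exact hy
      · intro hy
        exact ⟨φ i₀, rfl, i₀, rfl, hy⟩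
    rw [hnb, Set.ncard_coe_finset]
    have heval : (Polynomial.X + Polynomial.C 3).eval (Nat.clog 2 L.ncard)
        = Nat.clog 2 L.ncard + 3 := by simp
    rw [heval]
    exact hdeg i₀
  · intro S hSL hScard
    set I : Finset (Fin N) := univ.filter (fun i => φ i ∈ S) with hI
    have hSeq : S = φ '' ↑I := by
      ext x
      constructor
      · intro hx
        obtain ⟨i, rfl⟩ := φsurj x (hSL hx)
        exact ⟨i, by simp [hI, hx], rfl⟩
      · rintro ⟨i, hi, rfl⟩
        simp only [hI, Finset.coe_filter, Set.mem_setOf_eq] at hi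
        exact hi.2
    have hIcard : 2 ^ k ≤ I.card := by
      have : S.ncard = I.card := by
        rw [hSeq, Set.ncard_image_of_injective _ φinj, Set.ncard_coe_finset]
      omega
    have hnb : nbhd {p : α × Fin (2 ^ (k + 1)) | ∃ i, p.1 = φ i ∧ p.2 ∈ f i} S
        = ↑(I.biUnion f) := by
      ext y
      constructor
      · rintro ⟨x, hxS, i, hxi, hy⟩
        subst hxi
        exact Finset.mem_coe.2 (Finset.mem_biUnion.2 ⟨i, by simp [hI, hxS], hy⟩)
      · intro hy
        obtain ⟨i, hi, hyi⟩ := Finset.mem_biUnion.1 (Finset.mem_coe.1 hy)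
        simp only [hI, Finset.mem_filter] at hi
        exact ⟨φ i, hi.2, i, rfl, hyi⟩
    rw [hnb, Set.ncard_coe_finset]
    exact hexp I hIcard
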